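/- Let $B$ be a standard $d$-dimensional Brownian motion, $\epsilon > 0$, $T_0 = 0$, $T_n = \inf\{t > T_{n-1} : \|B(t) - B(T_{n-1})\|_\infty = \epsilon\}$, $A^{j}(t) = \sum_{n=1}^{\infty} (B^j(T_n) - B^j(T_{n-1})) \mathbf{1}_{\{T_n \le t\}}$, and let $\mathcal{F}^A_t$ denote the (completed) natural filtration of $A = (A^1,\ldots,A^d)$. Then for every $n \ge 0$ and every $t \ge 0$, the trace $\sigma$-algebras agree on the event $\{T_n \le t < T_{n+1}\}$: $\mathcal{F}^A_t \cap \{T_n \le t < T_{n+1}\} = \mathcal{F}^A_{T_n} \cap \{T_n \le t < T_{n+1}\}$, where $\mathcal{F}^A_{T_n}$ is the stopped $\sigma$-algebra at the stopping time $T_n$. -/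

import Mathlib

open MeasureTheory ProbabilityTheory Filter Topology

/-- `B` is a standard `d`-dimensional Brownian motion under the probability measure `P`:
it starts at `0`, has a.s. continuous paths, independent increments, and every increment
`B t - B s` (for `0 ≤ s ≤ t`) is a vector of `d` independent centered Gaussians of
variance `t - s`. -/
structure IsBrownianMotion {Ω : Type*} [MeasurableSpace Ω] {d : ℕ}
    (P : Measure Ω) (B : ℝ → Ω → (Fin d → ℝ)) : Prop where
  measurable : ∀ t : ℝ, Measurable (B t)
  start : ∀ᵐ ω ∂P, B 0 ω = 0
  cont : ∀ᵐ ω ∂P, Continuous fun t : ℝ => B t ω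
  indep_increments : ∀ (n : ℕ) (t : ℕ → ℝ), Monotone t →
    iIndepFun
      (fun i : Fin n => fun ω => B (t (i.1 + 1)) ω - B (t i.1) ω) P
  gaussian_increments : ∀ s t : ℝ, 0 ≤ s → s ≤ t →
    P.map (fun ω => B t ω - B s ω)
      = Measure.pi fun _ : Fin d => gaussianReal 0 (t - s).toNNReal

/-- The hitting times `T_0 = 0`,
`T_n = inf { t > T_{n-1} | ‖B t - B (T_{n-1})‖_∞ = ε }`.  The norm on `Fin d → ℝ`
is the sup norm. -/
noncomputable def hitTimes {Ω : Type*} {d : ℕ} (B : ℝ → Ω → (Fin d → ℝ)) (ε : ℝ)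
    (ω : Ω) : ℕ → ℝ
  | 0 => 0
  | n + 1 => sInf {t : ℝ | hitTimes B ε ω n < t ∧ ‖B t ω - B (hitTimes B ε ω n) ω‖ = ε}

/-- `τ^j = inf { t > 0 | |W^j t| = 1 }`, the exit time of the `j`-th coordinate
from `[-1, 1]`. -/
noncomputable def exitTime {Ω : Type*} {d : ℕ} (W : ℝ → Ω → (Fin d → ℝ)) (j : Fin d)
    (ω : Ω) : ℝ :=
  sInf {t : ℝ | 0 < t ∧ |W t ω j| = 1}

/-- `χ_d = E[min (τ^1, …, τ^d)]`. -/
noncomputable def chi {Ω : Type*} [MeasurableSpace Ω] {d : ℕ} (P : Measure Ω)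
    (W : ℝ → Ω → (Fin d → ℝ)) : ℝ :=
  ∫ ω, ⨅ j : Fin d, exitTime W j ω ∂P

/-- The skeleton (pure-jump discretization) of the `j`-th coordinate of the
Brownian motion: `A^j(t) = ∑_{n ≥ 1} (B^j(T_n) - B^j(T_{n-1})) 1_{T_n ≤ t}`. -/
noncomputable def skeleton {Ω : Type*} {d : ℕ} (B : ℝ → Ω → (Fin d → ℝ)) (ε : ℝ)
    (j : Fin d) (t : ℝ) (ω : Ω) : ℝ :=
  ∑' n : ℕ, if hitTimes B ε ω (n + 1) ≤ t
    then B (hitTimes B ε ω (n + 1)) ω j - B (hitTimes B ε ω n) ω j else 0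

/-- The completed natural filtration of a process `X`: at time `t`, the σ-algebra
generated by `X s`, `s ≤ t`, augmented by the `P`-null sets. -/
def completedNatural {Ω α : Type*} [MeasurableSpace Ω] [MeasurableSpace α]
    (P : Measure Ω) (X : ℝ → Ω → α) (t : ℝ) : MeasurableSpace Ω :=
  (⨆ s ∈ Set.Iic t, MeasurableSpace.comap (X s) inferInstance) ⊔
    MeasurableSpace.generateFrom {N : Set Ω | P N = 0}


section Det
variable {Ω : Type*} {d : ℕ} {B : ℝ → Ω → (Fin d → ℝ)} {ε : ℝ} {ω : Ω}

/-- The good-path property. -/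
def Good (B : ℝ → Ω → (Fin d → ℝ)) (ε : ℝ) (ω : Ω) : Prop :=
  Continuous (fun s => B s ω) ∧ B 0 ω = 0 ∧
    ∀ q M : ℕ, ∃ s : ℝ, (q : ℝ) ≤ s ∧ (M : ℝ) ≤ ‖B s ω - B (q : ℝ) ω‖

lemma hitTimes_zero : hitTimes B ε ω 0 = 0 := rfl

lemma hitTimes_succ (n : ℕ) : hitTimes B ε ω (n+1)
    = sInf {t : ℝ | hitTimes B ε ω n < t ∧ ‖B t ω - B (hitTimes B ε ω n) ω‖ = ε} := rfl

lemma Good.exists_exit (hω : Good B ε ω) (hε : 0 < ε) {u : ℝ} (hu : 0 ≤ u) :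
    ∃ s, u < s ∧ ‖B s ω - B u ω‖ = ε := by
  obtain ⟨q, hq⟩ := exists_nat_gt u
  obtain ⟨M, hM⟩ := exists_nat_ge (‖B q ω - B u ω‖ + ε)
  obtain ⟨s, hqs, hsM⟩ := hω.2.2 q M
  have hus : u ≤ s := le_trans hq.le hqs
  have hgs : ε ≤ ‖B s ω - B u ω‖ := by
    have : ‖B s ω - B q ω‖ ≤ ‖B s ω - B u ω‖ + ‖B q ω - B u ω‖ := by
      have := norm_sub_le (B s ω - B u ω) (B q ω - B u ω)
      simpa using this
    linarith
  have hcont : ContinuousOn (fun x => ‖B x ω - B u ω‖) (Set.Icc u s) :=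
    (continuous_norm.comp ((hω.1).sub continuous_const)).continuousOn
  have hmem : ε ∈ Set.Icc (‖B u ω - B u ω‖) (‖B s ω - B u ω‖) := by
    simp only [sub_self, norm_zero]
    exact ⟨hε.le, hgs⟩
  obtain ⟨x, hx, hxε⟩ := intermediate_value_Icc hus hcont hmem
  refine ⟨x, ?_, hxε⟩
  rcases eq_or_lt_of_le hx.1 with h | h
  · exfalso; rw [← h] at hxε; simp at hxε; exact (ne_of_gt hε) hxε.symm
  · exact h

lemma Good.hit (hω : Good B ε ω) (hε : 0 < ε) :
    ∀ k, 0 ≤ hitTimes B ε ω k ∧ hitTimes B ε ω k < hitTimes B ε ω (k+1) ∧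
      ‖B (hitTimes B ε ω (k+1)) ω - B (hitTimes B ε ω k) ω‖ = ε := by
  intro k
  induction k using Nat.strong_induction_on with
  | _ k ih =>
    have hk0 : 0 ≤ hitTimes B ε ω k := by
      cases k with
      | zero => exact le_refl 0
      | succ j => exact le_of_lt (lt_of_le_of_lt (ih j (Nat.lt_succ_self j)).1
          (ih j (Nat.lt_succ_self j)).2.1)
    set a := hitTimes B ε ω k with ha
    set S := {t : ℝ | a < t ∧ ‖B t ω - B a ω‖ = ε} with hSdef
    have hSne : S.Nonempty := by
      obtain ⟨s, hs1, hs2⟩ := hω.exists_exit hε hk0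
      exact ⟨s, hs1, hs2⟩
    have hSbdd : BddBelow S := ⟨a, fun x hx => le_of_lt hx.1⟩
    have hτ : hitTimes B ε ω (k+1) = sInf S := hitTimes_succ k
    have hclos : sInf S ∈ closure S := csInf_mem_closure hSne hSbdd
    have hC : closure S ⊆ {t : ℝ | a ≤ t ∧ ‖B t ω - B a ω‖ = ε} := by
      apply closure_minimal
      · intro x hx; exact ⟨hx.1.le, hx.2⟩
      · exact (isClosed_le continuous_const continuous_id).inter
          (isClosed_eq (continuous_norm.comp ((hω.1).sub continuous_const)) continuous_const)
    have hmem := hC hclos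
    have hne : sInf S ≠ a := by
      intro h
      have := hmem.2
      rw [h] at this
      simp at this
      exact (ne_of_gt hε) this.symm
    refine ⟨hk0, ?_, ?_⟩
    · rw [hτ]; exact lt_of_le_of_ne hmem.1 (Ne.symm hne)
    · rw [hτ]; exact hmem.2

lemma Good.hit_strictMono (hω : Good B ε ω) (hε : 0 < ε) :
    StrictMono (hitTimes B ε ω) :=
  strictMono_nat_of_lt_succ (fun k => (hω.hit hε k).2.1)

lemma Good.hit_unbounded (hω : Good B ε ω) (hε : 0 < ε) (u : ℝ) :
    ∃ k, u < hitTimes B ε ω k := by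
  by_contra h
  push_neg at h
  have hmono : Monotone (hitTimes B ε ω) := (hω.hit_strictMono hε).monotone
  have hbdd : BddAbove (Set.range (hitTimes B ε ω)) := ⟨u, by rintro x ⟨k, rfl⟩; exact h k⟩
  set L := ⨆ k, hitTimes B ε ω k with hL
  have hT : Tendsto (hitTimes B ε ω) atTop (𝓝 L) := tendsto_atTop_ciSup hmono hbdd
  have h1 : Tendsto (fun k => B (hitTimes B ε ω k) ω) atTop (𝓝 (B L ω)) :=
    ((hω.1).tendsto L).comp hT
  have h2 : Tendsto (fun k => B (hitTimes B ε ω (k+1)) ω) atTop (𝓝 (B L ω)) :=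
    h1.comp (tendsto_add_atTop_nat 1)
  have h3 : Tendsto (fun k => ‖B (hitTimes B ε ω (k+1)) ω - B (hitTimes B ε ω k) ω‖)
      atTop (𝓝 ‖B L ω - B L ω‖) := (h2.sub h1).norm
  have h4 : Tendsto (fun _ : ℕ => ε) atTop (𝓝 ‖B L ω - B L ω‖) := by
    convert h3 using 2 with k
    exact ((hω.hit hε k).2.2).symm
  have := tendsto_nhds_unique h4 tendsto_const_nhds
  simp at this
  exact (ne_of_gt hε) this.symm

lemma Good.exists_count (hω : Good B ε ω) (hε : 0 < ε) {u : ℝ} (hu : 0 ≤ u) :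
    ∃ m, hitTimes B ε ω m ≤ u ∧ u < hitTimes B ε ω (m+1) := by
  have hex : ∃ k, u < hitTimes B ε ω (k+1) := by
    obtain ⟨k, hk⟩ := hω.hit_unbounded hε u
    cases k with
    | zero => exact absurd hk (by simp [hitTimes_zero]; exact hu)
    | succ j => exact ⟨j, hk⟩
  refine ⟨Nat.find hex, ?_, Nat.find_spec hex⟩
  rcases Nat.eq_zero_or_pos (Nat.find hex) with h | h
  · rw [h, hitTimes_zero]; exact hu
  · obtain ⟨j, hj⟩ := Nat.exists_eq_succ_of_ne_zero (Nat.pos_iff_ne_zero.mp h)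
    have := Nat.find_min hex (by omega : j < Nat.find hex)
    push_neg at this
    rw [hj]
    exact this

lemma Good.count_iff (hω : Good B ε ω) (hε : 0 < ε) {u : ℝ} {m : ℕ}
    (h : hitTimes B ε ω m ≤ u ∧ u < hitTimes B ε ω (m+1)) (k : ℕ) :
    hitTimes B ε ω k ≤ u ↔ k ≤ m := by
  constructor
  · intro hk
    by_contra hkm
    push_neg at hkm
    have : hitTimes B ε ω (m+1) ≤ hitTimes B ε ω k :=
      (hω.hit_strictMono hε).monotone hkm
    linarith [h.2]
  · intro hk
    exact le_trans ((hω.hit_strictMono hε).monotone hk) h.1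

lemma Good.skeleton_eval (hω : Good B ε ω) (hε : 0 < ε) {u : ℝ} {m : ℕ}
    (h : hitTimes B ε ω m ≤ u ∧ u < hitTimes B ε ω (m+1)) :
    (fun i => skeleton B ε i u ω) = B (hitTimes B ε ω m) ω := by
  funext i
  have hsum : skeleton B ε i u ω
      = ∑ n ∈ Finset.range m, (if hitTimes B ε ω (n + 1) ≤ u
          then B (hitTimes B ε ω (n + 1)) ω i - B (hitTimes B ε ω n) ω i else 0) := by
    apply tsum_eq_sum
    intro b hb
    rw [if_neg]
    intro hble
    have : b + 1 ≤ m := ((hω.count_iff hε h) (b+1)).mp hble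
    exact hb (Finset.mem_range.mpr (by omega))
  rw [hsum]
  have : ∀ n ∈ Finset.range m, (if hitTimes B ε ω (n + 1) ≤ u
      then B (hitTimes B ε ω (n + 1)) ω i - B (hitTimes B ε ω n) ω i else 0)
      = B (hitTimes B ε ω (n + 1)) ω i - B (hitTimes B ε ω n) ω i := by
    intro n hn
    rw [if_pos]
    exact ((hω.count_iff hε h) (n+1)).mpr (Finset.mem_range.mp hn)
  rw [Finset.sum_congr rfl this, Finset.sum_range_sub (fun n => B (hitTimes B ε ω n) ω i)]
  rw [hitTimes_zero, hω.2.1]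
  simp

lemma Good.skeleton_neg (hω : Good B ε ω) (hε : 0 < ε) {u : ℝ} (hu : u < 0) :
    (fun i => skeleton B ε i u ω) = B (hitTimes B ε ω 0) ω := by
  funext i
  have : ∀ n : ℕ, (if hitTimes B ε ω (n + 1) ≤ u
      then B (hitTimes B ε ω (n + 1)) ω i - B (hitTimes B ε ω n) ω i else 0) = 0 := by
    intro n
    rw [if_neg]
    intro hle
    exact absurd (lt_of_le_of_lt hle hu) (not_lt.mpr (hω.hit hε (n+1)).1)
  rw [skeleton, tsum_congr (fun n => this n), tsum_zero, hitTimes_zero, hω.2.1]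
  simp

end Det

section Chain
variable {Ω : Type*} {d : ℕ} {B : ℝ → Ω → (Fin d → ℝ)} {ε : ℝ} {ω : Ω}

/-- The vector-valued skeleton process. -/
noncomputable def skelV {Ω : Type*} {d : ℕ} (B : ℝ → Ω → (Fin d → ℝ)) (ε : ℝ)
    (r : ℝ) (ω : Ω) : Fin d → ℝ := fun i => skeleton B ε i r ω

/-- There exist `k+1` time points in `ℚ ∪ {u}`, inside `[0, u]`, at which the skeleton
takes (adjacently) distinct values.  On good paths this says exactly that the `k`-th
jump has occurred by time `u`. -/
def chainProp {Ω : Type*} {d : ℕ} (B : ℝ → Ω → (Fin d → ℝ)) (ε : ℝ) (k : ℕ) (u : ℝ)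
    (ω : Ω) : Prop :=
  ∃ c : Fin (k+1) → ℝ, (∀ i, c i ∈ insert u (Set.range ((↑) : ℚ → ℝ))) ∧ StrictMono c ∧
    0 ≤ c 0 ∧ c (Fin.last k) ≤ u ∧
    ∀ i : Fin k, skelV B ε (c i.castSucc) ω ≠ skelV B ε (c i.succ) ω

lemma Good.skelV_eval (hω : Good B ε ω) (hε : 0 < ε) {u : ℝ} {m : ℕ}
    (h : hitTimes B ε ω m ≤ u ∧ u < hitTimes B ε ω (m+1)) :
    skelV B ε u ω = B (hitTimes B ε ω m) ω := hω.skeleton_eval hε h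

lemma Good.hit_ne (hω : Good B ε ω) (hε : 0 < ε) (i : ℕ) :
    B (hitTimes B ε ω (i+1)) ω ≠ B (hitTimes B ε ω i) ω := by
  intro heq
  have := (hω.hit hε i).2.2
  rw [heq, sub_self, norm_zero] at this
  exact (ne_of_gt hε) this.symm

lemma Good.chainProp_iff (hω : Good B ε ω) (hε : 0 < ε) (k : ℕ) (u : ℝ) :
    chainProp B ε k u ω ↔ hitTimes B ε ω k ≤ u := by
  constructor
  · rintro ⟨c, _hmem, hc, hc0, hclast, hne⟩
    have hcnn : ∀ i, 0 ≤ c i := fun i => le_trans hc0 (hc.monotone (Fin.zero_le i))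
    have hm : ∀ i : Fin (k+1), ∃ m, hitTimes B ε ω m ≤ c i ∧ c i < hitTimes B ε ω (m+1) :=
      fun i => hω.exists_count hε (hcnn i)
    choose m hm1 hm2 using hm
    have hmono : ∀ i : Fin k, m i.castSucc < m i.succ := by
      intro i
      have hle : m i.castSucc ≤ m i.succ := by
        have : hitTimes B ε ω (m i.castSucc) ≤ c i.succ :=
          le_trans (hm1 i.castSucc) (hc.monotone (Fin.castSucc_lt_succ : i.castSucc < i.succ).le)
        exact (hω.count_iff hε ⟨hm1 i.succ, hm2 i.succ⟩ (m i.castSucc)).mp this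
      rcases lt_or_eq_of_le hle with h | h
      · exact h
      · exfalso
        apply hne i
        rw [hω.skelV_eval hε ⟨hm1 i.castSucc, hm2 i.castSucc⟩,
          hω.skelV_eval hε ⟨hm1 i.succ, hm2 i.succ⟩, h]
    have hkey : ∀ j : ℕ, ∀ hj : j < k + 1, j ≤ m ⟨j, hj⟩ := by
      intro j
      induction j with
      | zero => intro _; exact Nat.zero_le _
      | succ i ih =>
        intro hj
        have hi : i < k + 1 := by omega
        have hik : i < k := by omega
        have := hmono ⟨i, hik⟩
        have hcs : (⟨i, hik⟩ : Fin k).castSucc = ⟨i, hi⟩ := rfl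
        have hsu : (⟨i, hik⟩ : Fin k).succ = ⟨i+1, hj⟩ := rfl
        rw [hcs, hsu] at this
        have := ih hi
        omega
    have hklast : k ≤ m (Fin.last k) := hkey k (Nat.lt_succ_self k)
    calc hitTimes B ε ω k ≤ hitTimes B ε ω (m (Fin.last k)) :=
          (hω.hit_strictMono hε).monotone hklast
      _ ≤ c (Fin.last k) := hm1 _
      _ ≤ u := hclast
  · intro hk
    have hu0 : 0 ≤ u := le_trans (hω.hit hε k).1 hk
    have hq : ∀ i : ℕ, ∃ q : ℚ, hitTimes B ε ω i < (q:ℝ) ∧ (q:ℝ) < hitTimes B ε ω (i+1) :=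
      fun i => exists_rat_btwn (hω.hit hε i).2.1
    choose q hq1 hq2 using hq
    by_cases hT : hitTimes B ε ω (k+1) ≤ u
    · refine ⟨fun i => ((q i.1 : ℚ) : ℝ), fun i => Or.inr ⟨q i.1, rfl⟩, ?_, ?_, ?_, ?_⟩
      · intro i j hij
        calc ((q i.1 : ℚ) : ℝ) < hitTimes B ε ω (i.1+1) := hq2 i.1
          _ ≤ hitTimes B ε ω j.1 := (hω.hit_strictMono hε).monotone
              (by have := Fin.lt_def.mp hij; omega)
          _ < (q j.1 : ℝ) := hq1 j.1
      · exact le_of_lt (lt_of_le_of_lt (hω.hit hε 0).1 (hq1 0))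
      · exact le_trans (hq2 k).le hT
      · intro i
        have e1 : skelV B ε ((q i.castSucc.1 : ℚ) : ℝ) ω
            = B (hitTimes B ε ω i.1) ω := by
          have := hω.skelV_eval hε (u := ((q i.castSucc.1 : ℚ) : ℝ)) (m := i.castSucc.1)
            ⟨(hq1 _).le, hq2 _⟩
          simpa using this
        have e2 : skelV B ε ((q i.succ.1 : ℚ) : ℝ) ω
            = B (hitTimes B ε ω (i.1+1)) ω := by
          have := hω.skelV_eval hε (u := ((q i.succ.1 : ℚ) : ℝ)) (m := i.succ.1)
            ⟨(hq1 _).le, hq2 _⟩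
          simpa using this
        rw [e1, e2]
        exact (hω.hit_ne hε i.1).symm
    · push_neg at hT
      refine ⟨fun i => if i.1 < k then ((q i.1 : ℚ) : ℝ) else u, ?_, ?_, ?_, ?_, ?_⟩
      · intro i
        by_cases h : i.1 < k
        · simp only [if_pos h]; exact Or.inr ⟨q i.1, rfl⟩
        · simp only [if_neg h]; exact Or.inl rfl
      · rw [Fin.strictMono_iff_lt_succ]
        intro i
        have hcs : (i.castSucc : Fin (k+1)).1 = i.1 := rfl
        have hsu : (i.succ : Fin (k+1)).1 = i.1 + 1 := rfl
        have hik : i.1 < k := i.2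
        rw [hcs, hsu, if_pos hik]
        by_cases h : i.1 + 1 < k
        · rw [if_pos h]
          exact lt_trans (hq2 i.1) (lt_of_le_of_lt
            ((hω.hit_strictMono hε).monotone (by omega)) (hq1 (i.1+1)))
        · rw [if_neg h]
          calc ((q i.1 : ℚ) : ℝ) < hitTimes B ε ω (i.1+1) := hq2 i.1
            _ ≤ hitTimes B ε ω k := (hω.hit_strictMono hε).monotone (by omega)
            _ ≤ u := hk
      · by_cases h : (0 : Fin (k+1)).1 < k
        · show 0 ≤ if (0 : Fin (k+1)).1 < k then ((q (0 : Fin (k+1)).1 : ℚ) : ℝ) else u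
          rw [if_pos h]
          exact le_of_lt (lt_of_le_of_lt (hω.hit hε 0).1 (by simpa using hq1 0))
        · show 0 ≤ if (0 : Fin (k+1)).1 < k then ((q (0 : Fin (k+1)).1 : ℚ) : ℝ) else u
          rw [if_neg h]; exact hu0
      · show (if (Fin.last k).1 < k then ((q (Fin.last k).1 : ℚ) : ℝ) else u) ≤ u
        have : (Fin.last k).1 = k := rfl
        rw [this, if_neg (lt_irrefl k)]
      · intro i
        beta_reduce
        have hcs : (i.castSucc : Fin (k+1)).1 = i.1 := rfl
        have hsu : (i.succ : Fin (k+1)).1 = i.1 + 1 := rfl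
        have hik : i.1 < k := i.2
        rw [hcs, hsu, if_pos hik]
        have e1 : skelV B ε ((q i.1 : ℚ) : ℝ) ω = B (hitTimes B ε ω i.1) ω :=
          hω.skelV_eval hε ⟨(hq1 _).le, hq2 _⟩
        rw [e1]
        by_cases h : i.1 + 1 < k
        · rw [if_pos h]
          have e2 : skelV B ε ((q (i.1+1) : ℚ) : ℝ) ω
              = B (hitTimes B ε ω (i.1+1)) ω := hω.skelV_eval hε ⟨(hq1 _).le, hq2 _⟩
          rw [e2]
          exact (hω.hit_ne hε i.1).symm
        · rw [if_neg h]
          have hk1 : i.1 + 1 = k := by omega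
          have e2 : skelV B ε u ω = B (hitTimes B ε ω k) ω :=
            hω.skelV_eval hε ⟨hk, hT⟩
          rw [e2]
          have hne2 := (hω.hit_ne hε i.1).symm
          rw [hk1] at hne2
          exact hne2

end Chain

section Val
variable {Ω : Type*} {d : ℕ} {B : ℝ → Ω → (Fin d → ℝ)} {ε : ℝ} {ω : Ω}

/-- The value of the skeleton just after its `k`-th jump lies in `C`, as read off
from the path up to time `u`. -/
def valProp {Ω : Type*} {d : ℕ} (B : ℝ → Ω → (Fin d → ℝ)) (ε : ℝ) (k : ℕ) (u : ℝ)
    (C : Set (Fin d → ℝ)) (ω : Ω) : Prop :=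
  ∃ x : ℝ, x ∈ insert u (Set.range ((↑) : ℚ → ℝ)) ∧ x ≤ u ∧ chainProp B ε k x ω ∧
    ¬ chainProp B ε (k+1) x ω ∧ skelV B ε x ω ∈ C

lemma Good.valProp_iff (hω : Good B ε ω) (hε : 0 < ε) {k : ℕ} {u : ℝ}
    (hk : hitTimes B ε ω k ≤ u) {C : Set (Fin d → ℝ)} :
    valProp B ε k u C ω ↔ B (hitTimes B ε ω k) ω ∈ C := by
  constructor
  · rintro ⟨x, _, _, hch, hnch, hC⟩
    rw [hω.chainProp_iff hε] at hch
    rw [hω.chainProp_iff hε] at hnch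
    push_neg at hnch
    rwa [hω.skelV_eval hε ⟨hch, hnch⟩] at hC
  · intro hC
    by_cases hT : hitTimes B ε ω (k+1) ≤ u
    · obtain ⟨x, hx1, hx2⟩ := exists_rat_btwn (hω.hit hε k).2.1
      refine ⟨x, Or.inr ⟨x, rfl⟩, le_trans hx2.le hT, ?_, ?_, ?_⟩
      · exact (hω.chainProp_iff hε _ _).mpr hx1.le
      · rw [hω.chainProp_iff hε]; exact not_le.mpr hx2
      · rwa [hω.skelV_eval hε ⟨hx1.le, hx2⟩]
    · push_neg at hT
      refine ⟨u, Or.inl rfl, le_refl u, ?_, ?_, ?_⟩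
      · exact (hω.chainProp_iff hε _ _).mpr hk
      · rw [hω.chainProp_iff hε]; exact not_le.mpr hT
      · rwa [hω.skelV_eval hε ⟨hk, hT⟩]

end Val

section Meas
variable {Ω : Type*} [MeasurableSpace Ω] {d : ℕ} {B : ℝ → Ω → (Fin d → ℝ)} {ε : ℝ}

/-- The (uncompleted) natural filtration of the skeleton. -/
noncomputable def natF (B : ℝ → Ω → (Fin d → ℝ)) (ε : ℝ) (r : ℝ) : MeasurableSpace Ω :=
  ⨆ s ∈ Set.Iic r, MeasurableSpace.comap (skelV B ε s) inferInstance

lemma natF_mono {r r' : ℝ} (h : r ≤ r') : natF B ε r ≤ natF B ε r' := by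
  apply iSup₂_le
  intro s hs
  exact le_biSup (fun s => MeasurableSpace.comap (skelV B ε s) inferInstance)
    (le_trans hs h : s ∈ Set.Iic r')

lemma measurable_skelV {r s : ℝ} (hs : s ≤ r) : Measurable[natF B ε r] (skelV B ε s) := by
  rw [measurable_iff_comap_le]
  exact le_biSup (fun s => MeasurableSpace.comap (skelV B ε s) inferInstance)
    (hs : s ∈ Set.Iic r)

lemma measurableSet_chainProp (k : ℕ) (u : ℝ) :
    MeasurableSet[natF B ε u] {ω | chainProp B ε k u ω} := by
  classical
  set D : Set ℝ := insert u (Set.range ((↑) : ℚ → ℝ)) with hD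
  have hDc : D.Countable := (Set.countable_range _).insert u
  have := hDc.to_subtype
  have hset : {ω | chainProp B ε k u ω} =
      ⋃ (e : Fin (k+1) → D), ⋃ (_ : StrictMono (fun i => (e i : ℝ)) ∧
        0 ≤ ((e 0 : ℝ)) ∧ ((e (Fin.last k) : ℝ)) ≤ u),
        ⋂ i : Fin k, {ω | skelV B ε ((e i.castSucc : ℝ)) ω ≠ skelV B ε ((e i.succ : ℝ)) ω} := by
    ext ω
    simp only [Set.mem_setOf_eq, Set.mem_iUnion, Set.mem_iInter]
    constructor
    · rintro ⟨c, hmem, hsm, h0, hlast, hne⟩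
      exact ⟨fun i => ⟨c i, hmem i⟩, ⟨hsm, h0, hlast⟩, fun i => hne i⟩
    · rintro ⟨e, ⟨hsm, h0, hlast⟩, hne⟩
      exact ⟨fun i => (e i : ℝ), fun i => (e i).2, hsm, h0, hlast, hne⟩
  rw [hset]
  apply MeasurableSet.iUnion
  intro e
  apply MeasurableSet.iUnion
  rintro ⟨hsm, _h0, hlast⟩
  apply MeasurableSet.iInter
  intro i
  have hle : ∀ j : Fin (k+1), ((e j : ℝ)) ≤ u :=
    fun j => le_trans (hsm.monotone (Fin.le_last j)) hlast
  have hmeas : Measurable[natF B ε u]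
      (fun ω => skelV B ε ((e i.castSucc : ℝ)) ω - skelV B ε ((e i.succ : ℝ)) ω) :=
    (measurable_skelV (hle _)).sub (measurable_skelV (hle _))
  have : {ω | skelV B ε ((e i.castSucc : ℝ)) ω ≠ skelV B ε ((e i.succ : ℝ)) ω}
      = ((fun ω => skelV B ε ((e i.castSucc : ℝ)) ω - skelV B ε ((e i.succ : ℝ)) ω) ⁻¹'
          {0})ᶜ := by
    ext ω
    simp [sub_eq_zero]
  rw [this]
  exact (hmeas (measurableSet_singleton 0)).compl

lemma measurableSet_valProp (k : ℕ) (u : ℝ) {C : Set (Fin d → ℝ)}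
    (hC : MeasurableSet C) :
    MeasurableSet[natF B ε u] {ω | valProp B ε k u C ω} := by
  classical
  set D : Set ℝ := insert u (Set.range ((↑) : ℚ → ℝ)) with hD
  have hDc : D.Countable := (Set.countable_range _).insert u
  have := hDc.to_subtype
  have hset : {ω | valProp B ε k u C ω} =
      ⋃ (x : D), ⋃ (_ : (x : ℝ) ≤ u),
        ({ω | chainProp B ε k (x : ℝ) ω} ∩ {ω | chainProp B ε (k+1) (x : ℝ) ω}ᶜ ∩
          skelV B ε (x : ℝ) ⁻¹' C) := by
    ext ω
    simp only [Set.mem_setOf_eq, Set.mem_iUnion, Set.mem_inter_iff, Set.mem_compl_iff,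
      Set.mem_preimage]
    constructor
    · rintro ⟨x, hx1, hx2, h3, h4, h5⟩
      exact ⟨⟨x, hx1⟩, hx2, ⟨h3, h4⟩, h5⟩
    · rintro ⟨x, hx2, ⟨h3, h4⟩, h5⟩
      exact ⟨(x : ℝ), x.2, hx2, h3, h4, h5⟩
  rw [hset]
  apply MeasurableSet.iUnion
  intro x
  apply MeasurableSet.iUnion
  intro hx
  exact (((natF_mono hx) _ (measurableSet_chainProp k (x : ℝ))).inter
      ((natF_mono hx) _ (measurableSet_chainProp (k+1) (x : ℝ))).compl).inter
    (measurable_skelV hx hC)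

variable (P : Measure Ω)

lemma measurableSet_completed_null {r : ℝ} {N : Set Ω} (h : P N = 0) :
    MeasurableSet[completedNatural P (skelV B ε) r] N :=
  (le_sup_right : _ ≤ completedNatural P (skelV B ε) r) _
    (MeasurableSpace.measurableSet_generateFrom h)

lemma measurableSet_completed_natF {r : ℝ} {S : Set Ω}
    (h : MeasurableSet[natF B ε r] S) :
    MeasurableSet[completedNatural P (skelV B ε) r] S :=
  (le_sup_left : natF B ε r ≤ completedNatural P (skelV B ε) r) _ h

lemma completed_mono {r r' : ℝ} (h : r ≤ r') :
    completedNatural P (skelV B ε) r ≤ completedNatural P (skelV B ε) r' :=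
  sup_le_sup_right (iSup₂_le fun s hs =>
    le_biSup (fun s => MeasurableSpace.comap (skelV B ε s) inferInstance)
      (le_trans hs h : s ∈ Set.Iic r')) _

lemma measurableSet_completed_congr {r : ℝ} {X Y : Set Ω}
    (hX : MeasurableSet[completedNatural P (skelV B ε) r] X)
    (h1 : P (Y \ X) = 0) (h2 : P (X \ Y) = 0) :
    MeasurableSet[completedNatural P (skelV B ε) r] Y := by
  have hY : Y = (X ∪ (Y \ X)) \ (X \ Y) := by
    ext ω
    simp only [Set.mem_diff, Set.mem_union]
    by_cases h : ω ∈ X <;> by_cases h' : ω ∈ Y <;> simp [h, h']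
  rw [hY]
  exact (hX.union (measurableSet_completed_null P h1)).diff
    (measurableSet_completed_null P h2)

end Meas

section Prob
open Real
open scoped NNReal ENNReal
variable {Ω : Type*} [MeasurableSpace Ω] {d : ℕ} {B : ℝ → Ω → (Fin d → ℝ)} {ε : ℝ}
variable (P : Measure Ω) [IsProbabilityMeasure P]

lemma gauss_Icc_bound (v : ℝ≥0) (hv : v ≠ 0) (M : ℝ) :
    gaussianReal 0 v (Set.Icc (-M) M)
      ≤ ENNReal.ofReal ((Real.sqrt (2 * π * v))⁻¹) * ENNReal.ofReal (2 * M) := by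
  rw [gaussianReal_apply 0 hv _]
  have hb : ∀ x : ℝ, gaussianPDF 0 v x ≤ ENNReal.ofReal ((Real.sqrt (2 * π * v))⁻¹) := by
    intro x
    refine ENNReal.ofReal_le_ofReal ?_
    rw [gaussianPDFReal]
    have h1 : Real.exp (-(x - 0) ^ 2 / (2 * v)) ≤ 1 := by
      rw [Real.exp_le_one_iff]
      apply div_nonpos_of_nonpos_of_nonneg
      · simp [sq_nonneg]
      · positivity
    calc (Real.sqrt (2 * π * v))⁻¹ * Real.exp (-(x - 0) ^ 2 / (2 * v))
        ≤ (Real.sqrt (2 * π * v))⁻¹ * 1 := by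
          apply mul_le_mul_of_nonneg_left h1 (by positivity)
      _ = (Real.sqrt (2 * π * v))⁻¹ := mul_one _
  calc ∫⁻ x in Set.Icc (-M) M, gaussianPDF 0 v x
      ≤ ∫⁻ _ in Set.Icc (-M) M, ENNReal.ofReal ((Real.sqrt (2 * π * v))⁻¹) :=
        lintegral_mono fun x => hb x
    _ = ENNReal.ofReal ((Real.sqrt (2 * π * v))⁻¹) * volume (Set.Icc (-M) M) :=
        setLIntegral_const _ _
    _ = ENNReal.ofReal ((Real.sqrt (2 * π * v))⁻¹) * ENNReal.ofReal (2 * M) := by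
        rw [Real.volume_Icc, sub_neg_eq_add, ← two_mul]

lemma pi_eval_preimage_measure {d : ℕ} (hd : 0 < d) (v : ℝ≥0) {S : Set ℝ}
    (hS : MeasurableSet S) (j0 : Fin d) :
    Measure.pi (fun _ : Fin d => gaussianReal 0 v) (Function.eval j0 ⁻¹' S)
      = gaussianReal 0 v S := by
  classical
  rw [Set.eval_preimage, Measure.pi_pi]
  rw [Finset.prod_eq_single_of_mem j0 (Finset.mem_univ _)]
  · rw [Function.update_self]
  · intro i _ hi
    rw [Function.update_of_ne hi]
    exact measure_univ

lemma sqrt_seq_tendsto : Filter.Tendsto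
    (fun m : ℕ => ENNReal.ofReal ((Real.sqrt (2 * π * ((m:ℝ)+1)))⁻¹)) Filter.atTop (𝓝 0) := by
  rw [show (0 : ℝ≥0∞) = ENNReal.ofReal 0 by simp]
  apply ENNReal.tendsto_ofReal
  apply Filter.Tendsto.inv_tendsto_atTop
  rw [Filter.tendsto_atTop]
  intro b
  rw [Filter.eventually_atTop]
  refine ⟨⌈b^2⌉₊, fun m hm => ?_⟩
  rcases le_or_gt b 0 with hb | hb
  · exact le_trans hb (Real.sqrt_nonneg _)
  · have h1 : b^2 ≤ (m:ℝ) + 1 := by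
      have := Nat.le_ceil (b^2)
      have h2 : (⌈b^2⌉₊ : ℝ) ≤ m := Nat.cast_le.mpr hm
      linarith
    have h2 : (m:ℝ) + 1 ≤ 2 * π * ((m:ℝ)+1) := by
      nlinarith [Real.pi_gt_three]
    calc b = Real.sqrt (b^2) := (Real.sqrt_sq hb.le).symm
      _ ≤ Real.sqrt (2 * π * ((m:ℝ)+1)) := Real.sqrt_le_sqrt (by linarith)

end Prob

section Prob2
open Real
open scoped NNReal ENNReal
variable {Ω : Type*} [MeasurableSpace Ω] {d : ℕ} {B : ℝ → Ω → (Fin d → ℝ)} {ε : ℝ}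
variable (P : Measure Ω) [IsProbabilityMeasure P]

lemma never_exit_null (hd : 0 < d) (hB : IsBrownianMotion P B) (q M : ℕ) :
    P {ω | ∀ s : ℝ, (q:ℝ) ≤ s → ‖B s ω - B (q:ℝ) ω‖ < (M:ℝ)} = 0 := by
  set j0 : Fin d := ⟨0, hd⟩ with hj0
  set bad := {ω | ∀ s : ℝ, (q:ℝ) ≤ s → ‖B s ω - B (q:ℝ) ω‖ < (M:ℝ)} with hbad
  have hsub : ∀ m : ℕ, bad ⊆ {ω | |(B ((q:ℝ)+(m:ℝ)+1) ω - B (q:ℝ) ω) j0| ≤ (M:ℝ)} := by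
    intro m ω hω
    have hs := hω ((q:ℝ)+(m:ℝ)+1) (by linarith [Nat.cast_nonneg (α := ℝ) m])
    have h1 : |(B ((q:ℝ)+(m:ℝ)+1) ω - B (q:ℝ) ω) j0|
        ≤ ‖B ((q:ℝ)+(m:ℝ)+1) ω - B (q:ℝ) ω‖ := by
      rw [← Real.norm_eq_abs]
      exact norm_le_pi_norm _ j0
    exact le_trans h1 hs.le
  have hDm : ∀ m : ℕ, P {ω | |(B ((q:ℝ)+(m:ℝ)+1) ω - B (q:ℝ) ω) j0| ≤ (M:ℝ)}
      = gaussianReal 0 (((q:ℝ)+(m:ℝ)+1 - (q:ℝ)).toNNReal) (Set.Icc (-(M:ℝ)) M) := by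
    intro m
    have hg : Measurable (fun ω => B ((q:ℝ)+(m:ℝ)+1) ω - B (q:ℝ) ω) :=
      (hB.measurable _).sub (hB.measurable _)
    have hS : MeasurableSet (Function.eval j0 ⁻¹' (Set.Icc (-(M:ℝ)) (M:ℝ)) : Set (Fin d → ℝ)) :=
      (measurable_pi_apply j0) measurableSet_Icc
    have hset : {ω | |(B ((q:ℝ)+(m:ℝ)+1) ω - B (q:ℝ) ω) j0| ≤ (M:ℝ)}
        = (fun ω => B ((q:ℝ)+(m:ℝ)+1) ω - B (q:ℝ) ω) ⁻¹'
            (Function.eval j0 ⁻¹' Set.Icc (-(M:ℝ)) (M:ℝ)) := by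
      ext ω
      simp [abs_le, Function.eval]
    rw [hset, ← Measure.map_apply hg hS,
      hB.gaussian_increments (q:ℝ) ((q:ℝ)+(m:ℝ)+1) (Nat.cast_nonneg q)
        (by linarith [Nat.cast_nonneg (α := ℝ) m]),
      pi_eval_preimage_measure hd _ measurableSet_Icc j0]
  have hvar : ∀ m : ℕ, (((q:ℝ)+(m:ℝ)+1 - (q:ℝ)).toNNReal : ℝ≥0) = ((m:ℝ)+1).toNNReal := by
    intro m; congr 1; ring
  have hvne : ∀ m : ℕ, (((m:ℝ)+1).toNNReal : ℝ≥0) ≠ 0 := by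
    intro m
    simp only [ne_eq, Real.toNNReal_eq_zero, not_le]
    positivity
  have hbound : ∀ m : ℕ, P bad
      ≤ ENNReal.ofReal ((Real.sqrt (2 * π * ((m:ℝ)+1)))⁻¹) * ENNReal.ofReal (2 * (M:ℝ)) := by
    intro m
    calc P bad ≤ P {ω | |(B ((q:ℝ)+(m:ℝ)+1) ω - B (q:ℝ) ω) j0| ≤ (M:ℝ)} :=
          measure_mono (hsub m)
      _ = gaussianReal 0 (((m:ℝ)+1).toNNReal) (Set.Icc (-(M:ℝ)) M) := by rw [hDm m, hvar m]
      _ ≤ ENNReal.ofReal ((Real.sqrt (2 * π * (((m:ℝ)+1).toNNReal : ℝ)))⁻¹)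
            * ENNReal.ofReal (2 * (M:ℝ)) := gauss_Icc_bound _ (hvne m) _
      _ = ENNReal.ofReal ((Real.sqrt (2 * π * ((m:ℝ)+1)))⁻¹) * ENNReal.ofReal (2 * (M:ℝ)) := by
          rw [Real.coe_toNNReal _ (by positivity)]
  have htd : Filter.Tendsto (fun m : ℕ =>
      ENNReal.ofReal ((Real.sqrt (2 * π * ((m:ℝ)+1)))⁻¹) * ENNReal.ofReal (2 * (M:ℝ)))
      Filter.atTop (𝓝 0) := by
    have := ENNReal.Tendsto.mul_const sqrt_seq_tendsto
      (Or.inr (ENNReal.ofReal_ne_top : ENNReal.ofReal (2 * (M:ℝ)) ≠ ⊤))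
    simpa using this
  have : P bad ≤ 0 := ge_of_tendsto' htd hbound
  exact le_zero_iff.mp this

lemma good_compl_null (hd : 0 < d) (hB : IsBrownianMotion P B) :
    P {ω | ¬ Good B ε ω} = 0 := by
  have hsub : {ω | ¬ Good B ε ω} ⊆ {ω | ¬ Continuous (fun s => B s ω)} ∪
      ({ω | ¬ B 0 ω = 0} ∪ ⋃ (q : ℕ), ⋃ (M : ℕ),
        {ω | ∀ s : ℝ, (q:ℝ) ≤ s → ‖B s ω - B (q:ℝ) ω‖ < (M:ℝ)}) := by
    intro ω hω
    by_cases h1 : Continuous (fun s => B s ω)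
    · by_cases h2 : B 0 ω = 0
      · right; right
        have h3 : ¬ ∀ q M : ℕ, ∃ s : ℝ, (q:ℝ) ≤ s ∧ (M:ℝ) ≤ ‖B s ω - B (q:ℝ) ω‖ :=
          fun h => hω ⟨h1, h2, h⟩
        push_neg at h3
        obtain ⟨q, M, h4⟩ := h3
        exact Set.mem_iUnion.mpr ⟨q, Set.mem_iUnion.mpr ⟨M, fun s hs => h4 s hs⟩⟩
      · right; left; exact h2
    · left; exact h1
  apply measure_mono_null hsub
  apply measure_union_null
  · exact ae_iff.mp hB.cont
  apply measure_union_null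
  · exact ae_iff.mp hB.start
  · apply measure_iUnion_null
    intro q
    apply measure_iUnion_null
    intro M
    exact never_exit_null P hd hB q M

end Prob2

section Main
open Real
open scoped NNReal ENNReal
variable {Ω : Type*} [MeasurableSpace Ω] {d : ℕ} {B : ℝ → Ω → (Fin d → ℝ)} {ε : ℝ}
variable (P : Measure Ω) [IsProbabilityMeasure P]

lemma null_diff_of_good (hd : 0 < d) (hB : IsBrownianMotion P B) {X Y : Set Ω}
    (h : ∀ ω, Good B ε ω → (ω ∈ X ↔ ω ∈ Y)) : P (X \ Y) = 0 := by
  apply measure_mono_null _ (good_compl_null P hd hB (ε := ε))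
  intro ω hω
  by_contra hg
  simp only [Set.mem_setOf_eq, not_not] at hg
  exact hω.2 ((h ω hg).mp hω.1)

lemma stopSet_meas (hd : 0 < d) (hB : IsBrownianMotion P B) (hε : 0 < ε) (n : ℕ) (r : ℝ) :
    MeasurableSet[completedNatural P (skelV B ε) r] {ω | hitTimes B ε ω n ≤ r} := by
  apply measurableSet_completed_congr P
    (measurableSet_completed_natF P (measurableSet_chainProp n r))
  · exact null_diff_of_good P hd hB fun ω hω => (hω.chainProp_iff hε n r).symm
  · exact null_diff_of_good P hd hB fun ω hω => hω.chainProp_iff hε n r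

/-- The candidate stopped version of the generator set `{skelV s ∈ C}`. -/
def cellSet {Ω : Type*} {d : ℕ} (B : ℝ → Ω → (Fin d → ℝ)) (ε : ℝ) (n : ℕ) (s : ℝ)
    (C : Set (Fin d → ℝ)) : Set Ω :=
  (⋃ k : Fin n, (({ω | chainProp B ε k.1 s ω} ∩ {ω | chainProp B ε (k.1+1) s ω}ᶜ) ∩
    {ω | valProp B ε k.1 s C ω})) ∪
  ({ω | chainProp B ε n s ω} ∩ {ω | valProp B ε n s C ω})

lemma measurableSet_cellSet (n : ℕ) (s : ℝ) {C : Set (Fin d → ℝ)} (hC : MeasurableSet C) :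
    MeasurableSet[natF B ε s] (cellSet B ε n s C) := by
  apply MeasurableSet.union
  · apply MeasurableSet.iUnion
    intro k
    exact ((measurableSet_chainProp k.1 s).inter
      (measurableSet_chainProp (k.1+1) s).compl).inter (measurableSet_valProp k.1 s hC)
  · exact (measurableSet_chainProp n s).inter (measurableSet_valProp n s hC)

lemma Good.mem_cellSet_iff_left {ω : Ω} (hω : Good B ε ω) (hε : 0 < ε) {n : ℕ} {t s : ℝ}
    (hE : hitTimes B ε ω n ≤ t ∧ t < hitTimes B ε ω (n+1)) (hs : s ≤ t) (hs0 : 0 ≤ s)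
    {C : Set (Fin d → ℝ)} :
    ω ∈ cellSet B ε n s C ↔ skelV B ε s ω ∈ C := by
  obtain ⟨m, hm⟩ := hω.exists_count hε hs0
  have hmn : m ≤ n := by
    by_contra hc
    push_neg at hc
    have : hitTimes B ε ω (n+1) ≤ s := (hω.count_iff hε hm (n+1)).mpr (by omega)
    linarith [hE.2]
  rw [hω.skelV_eval hε hm]
  simp only [cellSet, Set.mem_union, Set.mem_iUnion, Set.mem_inter_iff, Set.mem_compl_iff,
    Set.mem_setOf_eq]
  constructor
  · rintro (⟨k, ⟨hc1, hc2⟩, hv⟩ | ⟨hc, hv⟩)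
    · have h1 : k.1 ≤ m := (hω.count_iff hε hm k.1).mp ((hω.chainProp_iff hε k.1 s).mp hc1)
      have h2 : ¬ (k.1 + 1 ≤ m) := by
        intro h
        exact hc2 ((hω.chainProp_iff hε (k.1+1) s).mpr ((hω.count_iff hε hm (k.1+1)).mpr h))
      have hkm : k.1 = m := by omega
      rw [← hkm]
      exact (hω.valProp_iff hε (by rw [hkm]; exact hm.1)).mp hv
    · have h1 : n ≤ m := (hω.count_iff hε hm n).mp ((hω.chainProp_iff hε n s).mp hc)
      have hnm : m = n := by omega
      rw [hnm]
      exact (hω.valProp_iff hε (by rw [← hnm]; exact hm.1)).mp hv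
  · intro hCm
    by_cases hmn' : m = n
    · right
      constructor
      · exact (hω.chainProp_iff hε n s).mpr (by rw [← hmn']; exact hm.1)
      · exact (hω.valProp_iff hε (by rw [← hmn']; exact hm.1)).mpr (by rw [← hmn']; exact hCm)
    · left
      refine ⟨⟨m, by omega⟩, ⟨?_, ?_⟩, ?_⟩
      · exact (hω.chainProp_iff hε m s).mpr hm.1
      · intro h
        have := (hω.count_iff hε hm (m+1)).mp ((hω.chainProp_iff hε (m+1) s).mp h)
        omega
      · exact (hω.valProp_iff hε hm.1).mpr hCm

lemma Good.mem_cellSet_iff_right {ω : Ω} (hω : Good B ε ω) (hε : 0 < ε) {n : ℕ} {r s : ℝ}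
    (hr : hitTimes B ε ω n ≤ r) (hrs : r < s) {C : Set (Fin d → ℝ)} :
    ω ∈ cellSet B ε n s C ↔ B (hitTimes B ε ω n) ω ∈ C := by
  have hTns : hitTimes B ε ω n ≤ s := le_trans hr hrs.le
  simp only [cellSet, Set.mem_union, Set.mem_iUnion, Set.mem_inter_iff, Set.mem_compl_iff,
    Set.mem_setOf_eq]
  constructor
  · rintro (⟨k, ⟨_hc1, hc2⟩, _hv⟩ | ⟨_hc, hv⟩)
    · exfalso
      apply hc2
      apply (hω.chainProp_iff hε (k.1+1) s).mpr
      calc hitTimes B ε ω (k.1+1) ≤ hitTimes B ε ω n :=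
            (hω.hit_strictMono hε).monotone (by have := k.2; omega)
        _ ≤ s := hTns
    · exact (hω.valProp_iff hε hTns).mp hv
  · intro hC
    right
    exact ⟨(hω.chainProp_iff hε n s).mpr hTns, (hω.valProp_iff hε hTns).mpr hC⟩

end Main

section Main2
open Real
open scoped NNReal ENNReal
variable {Ω : Type*} [MeasurableSpace Ω] {d : ℕ} {B : ℝ → Ω → (Fin d → ℝ)} {ε : ℝ}
variable (P : Measure Ω) [IsProbabilityMeasure P]

/-- The event `{T_n ≤ t < T_{n+1}}`. -/
def eventE {Ω : Type*} {d : ℕ} (B : ℝ → Ω → (Fin d → ℝ)) (ε : ℝ) (n : ℕ) (t : ℝ) : Set Ω :=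
  {ω | hitTimes B ε ω n ≤ t ∧ t < hitTimes B ε ω (n + 1)}

/-- `S'` is measurable for the stopped σ-algebra at `T_n`. -/
def stopProp (P : Measure Ω) (B : ℝ → Ω → (Fin d → ℝ)) (ε : ℝ) (n : ℕ) (S' : Set Ω) : Prop :=
  ∀ r : ℝ, MeasurableSet[completedNatural P (skelV B ε) r]
    (S' ∩ {ω | hitTimes B ε ω n ≤ r})

/-- `S` agrees on `E` (mod null) with some stopped-measurable set. -/
def GProp (P : Measure Ω) (B : ℝ → Ω → (Fin d → ℝ)) (ε : ℝ) (n : ℕ) (t : ℝ)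
    (S : Set Ω) : Prop :=
  ∃ S', stopProp P B ε n S' ∧
    P ((S' ∩ eventE B ε n t) \ (S ∩ eventE B ε n t)) = 0 ∧
    P ((S ∩ eventE B ε n t) \ (S' ∩ eventE B ε n t)) = 0

lemma Good.skelV_neg' {ω : Ω} (hω : Good B ε ω) (hε : 0 < ε) {s : ℝ} (hs : s < 0) :
    skelV B ε s ω = 0 := by
  have h2 : skelV B ε s ω = B (hitTimes B ε ω 0) ω := hω.skeleton_neg hε hs
  rw [h2, hitTimes_zero, hω.2.1]

lemma generator_GProp (hd : 0 < d) (hB : IsBrownianMotion P B) (hε : 0 < ε) {n : ℕ}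
    {t s : ℝ} (hs : s ≤ t) {C : Set (Fin d → ℝ)} (hC : MeasurableSet C) :
    GProp P B ε n t (skelV B ε s ⁻¹' C) := by
  by_cases hs0 : 0 ≤ s
  · refine ⟨cellSet B ε n s C, ?_, ?_, ?_⟩
    · intro r
      rcases le_or_gt s r with h | h
      · exact (measurableSet_completed_natF P
          ((natF_mono h) _ (measurableSet_cellSet n s hC))).inter
          (stopSet_meas P hd hB hε n r)
      · apply measurableSet_completed_congr P
          (X := {ω | valProp B ε n r C ω} ∩ {ω | chainProp B ε n r ω})
          (measurableSet_completed_natF P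
            ((measurableSet_valProp n r hC).inter (measurableSet_chainProp n r)))
        · apply null_diff_of_good P hd hB
          intro ω hω
          constructor
          · rintro ⟨hcell, hTn⟩
            have hTn' : hitTimes B ε ω n ≤ r := hTn
            have hBC := (hω.mem_cellSet_iff_right hε hTn' h).mp hcell
            exact ⟨(hω.valProp_iff hε hTn').mpr hBC, (hω.chainProp_iff hε n r).mpr hTn'⟩
          · rintro ⟨hval, hchain⟩
            have hTn' : hitTimes B ε ω n ≤ r := (hω.chainProp_iff hε n r).mp hchain
            exact ⟨(hω.mem_cellSet_iff_right hε hTn' h).mpr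
              ((hω.valProp_iff hε hTn').mp hval), hTn'⟩
        · apply null_diff_of_good P hd hB
          intro ω hω
          constructor
          · rintro ⟨hval, hchain⟩
            have hTn' : hitTimes B ε ω n ≤ r := (hω.chainProp_iff hε n r).mp hchain
            exact ⟨(hω.mem_cellSet_iff_right hε hTn' h).mpr
              ((hω.valProp_iff hε hTn').mp hval), hTn'⟩
          · rintro ⟨hcell, hTn⟩
            have hTn' : hitTimes B ε ω n ≤ r := hTn
            have hBC := (hω.mem_cellSet_iff_right hε hTn' h).mp hcell
            exact ⟨(hω.valProp_iff hε hTn').mpr hBC, (hω.chainProp_iff hε n r).mpr hTn'⟩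
    · apply null_diff_of_good P hd hB
      intro ω hω
      have key : ∀ hE : ω ∈ eventE B ε n t,
          (ω ∈ cellSet B ε n s C ↔ skelV B ε s ω ∈ C) :=
        fun hE => hω.mem_cellSet_iff_left hε hE hs hs0
      constructor
      · rintro ⟨h1, h2⟩; exact ⟨(key h2).mp h1, h2⟩
      · rintro ⟨h1, h2⟩; exact ⟨(key h2).mpr h1, h2⟩
    · apply null_diff_of_good P hd hB
      intro ω hω
      have key : ∀ hE : ω ∈ eventE B ε n t,
          (ω ∈ cellSet B ε n s C ↔ skelV B ε s ω ∈ C) :=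
        fun hE => hω.mem_cellSet_iff_left hε hE hs hs0
      constructor
      · rintro ⟨h1, h2⟩; exact ⟨(key h2).mpr h1, h2⟩
      · rintro ⟨h1, h2⟩; exact ⟨(key h2).mp h1, h2⟩
  · push_neg at hs0
    classical
    refine ⟨if (0 : Fin d → ℝ) ∈ C then Set.univ else ∅, ?_, ?_, ?_⟩
    · intro r
      split_ifs with h0
      · rw [Set.univ_inter]
        exact stopSet_meas P hd hB hε n r
      · rw [Set.empty_inter]
        exact @MeasurableSet.empty Ω (completedNatural P (skelV B ε) r)
    · apply null_diff_of_good P hd hB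
      intro ω hω
      have hz : skelV B ε s ω = 0 := hω.skelV_neg' hε hs0
      constructor
      · rintro ⟨h1, h2⟩
        refine ⟨?_, h2⟩
        rw [Set.mem_preimage, hz]
        by_contra h0
        rw [if_neg h0] at h1
        exact h1
      · rintro ⟨h1, h2⟩
        rw [Set.mem_preimage, hz] at h1
        rw [if_pos h1]
        exact ⟨Set.mem_univ ω, h2⟩
    · apply null_diff_of_good P hd hB
      intro ω hω
      have hz : skelV B ε s ω = 0 := hω.skelV_neg' hε hs0
      constructor
      · rintro ⟨h1, h2⟩
        rw [Set.mem_preimage, hz] at h1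
        rw [if_pos h1]
        exact ⟨Set.mem_univ ω, h2⟩
      · rintro ⟨h1, h2⟩
        refine ⟨?_, h2⟩
        rw [Set.mem_preimage, hz]
        by_contra h0
        rw [if_neg h0] at h1
        exact h1

lemma null_GProp {n : ℕ} {t : ℝ} {N : Set Ω} (hN : P N = 0) : GProp P B ε n t N := by
  refine ⟨∅, ?_, ?_, ?_⟩
  · intro r
    rw [Set.empty_inter]
    exact @MeasurableSet.empty Ω (completedNatural P (skelV B ε) r)
  · rw [Set.empty_inter]
    simp
  · rw [Set.empty_inter, Set.diff_empty]
    exact measure_mono_null (Set.inter_subset_left) hN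

/-- The collection of sets satisfying `GProp`, as a σ-algebra.  Requires `hd`, `hB`, `hε`
only through the lemmas used in the proofs of the σ-algebra axioms. -/
def gSigma (hd : 0 < d) (hB : IsBrownianMotion P B) (hε : 0 < ε) (n : ℕ) (t : ℝ) :
    MeasurableSpace Ω :=
    { MeasurableSet' := GProp P B ε n t
      measurableSet_empty := by
        refine ⟨∅, ?_, ?_, ?_⟩
        · intro r; rw [Set.empty_inter]; exact @MeasurableSet.empty Ω (completedNatural P (skelV B ε) r)
        · simp
        · simp
      measurableSet_compl := by
        rintro S ⟨S', h1, h2, h3⟩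
        refine ⟨S'ᶜ, ?_, ?_, ?_⟩
        · intro r
          have he : S'ᶜ ∩ {ω | hitTimes B ε ω n ≤ r}
              = {ω | hitTimes B ε ω n ≤ r} \ (S' ∩ {ω | hitTimes B ε ω n ≤ r}) := by
            ext ω; simp only [Set.mem_inter_iff, Set.mem_compl_iff, Set.mem_diff,
              Set.mem_setOf_eq]; tauto
          rw [he]
          exact (stopSet_meas P hd hB hε n r).diff (h1 r)
        · have he : (S'ᶜ ∩ eventE B ε n t) \ (Sᶜ ∩ eventE B ε n t)
              = (S ∩ eventE B ε n t) \ (S' ∩ eventE B ε n t) := by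
            ext ω; simp only [Set.mem_inter_iff, Set.mem_compl_iff, Set.mem_diff]; tauto
          rw [he]; exact h3
        · have he : (Sᶜ ∩ eventE B ε n t) \ (S'ᶜ ∩ eventE B ε n t)
              = (S' ∩ eventE B ε n t) \ (S ∩ eventE B ε n t) := by
            ext ω; simp only [Set.mem_inter_iff, Set.mem_compl_iff, Set.mem_diff]; tauto
          rw [he]; exact h2
      measurableSet_iUnion := by
        intro f hf
        choose g hg1 hg2 hg3 using hf
        refine ⟨⋃ i, g i, ?_, ?_, ?_⟩
        · intro r
          rw [Set.iUnion_inter]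
          exact MeasurableSet.iUnion fun i => hg1 i r
        · apply measure_mono_null
            (?_ : _ ⊆ ⋃ i, ((g i ∩ eventE B ε n t) \ (f i ∩ eventE B ε n t)))
          · exact measure_iUnion_null fun i => hg2 i
          · rintro ω ⟨⟨hg, hE⟩, hnf⟩
            obtain ⟨i, hi⟩ := Set.mem_iUnion.mp hg
            refine Set.mem_iUnion.mpr ⟨i, ⟨hi, hE⟩, ?_⟩
            intro ⟨hfi, _⟩
            exact hnf ⟨Set.mem_iUnion.mpr ⟨i, hfi⟩, hE⟩
        · apply measure_mono_null
            (?_ : _ ⊆ ⋃ i, ((f i ∩ eventE B ε n t) \ (g i ∩ eventE B ε n t)))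
          · exact measure_iUnion_null fun i => hg3 i
          · rintro ω ⟨⟨hg, hE⟩, hnf⟩
            obtain ⟨i, hi⟩ := Set.mem_iUnion.mp hg
            refine Set.mem_iUnion.mpr ⟨i, ⟨hi, hE⟩, ?_⟩
            intro ⟨hfi, _⟩
            exact hnf ⟨Set.mem_iUnion.mpr ⟨i, hfi⟩, hE⟩ }

lemma mem_GProp_of_completed (hd : 0 < d) (hB : IsBrownianMotion P B) (hε : 0 < ε)
    (n : ℕ) (t : ℝ) {S : Set Ω}
    (hS : MeasurableSet[completedNatural P (skelV B ε) t] S) : GProp P B ε n t S := by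
  have hle : completedNatural P (skelV B ε) t ≤ gSigma P hd hB hε n t := by
    apply sup_le
    · apply iSup₂_le
      intro s hs
      have hm : Measurable[gSigma P hd hB hε n t] (skelV B ε s) :=
        fun C hC => generator_GProp P hd hB hε hs hC
      exact measurable_iff_comap_le.mp hm
    · exact MeasurableSpace.generateFrom_le fun N hN => null_GProp P hN
  exact hle S hS

end Main2

/-- On the event `{T_n ≤ t < T_{n+1}}`, the trace of the σ-algebra `F^A_t` of the
completed natural filtration of the skeleton `A` coincides with the trace of the
stopped σ-algebra `F^A_{T_n} = {S | ∀ r, S ∩ {T_n ≤ r} ∈ F^A_r}`. -/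
theorem skeleton_filtration_trace_eq_stopped_trace
    {Ω : Type*} [MeasurableSpace Ω] (P : Measure Ω) [IsProbabilityMeasure P]
    {d : ℕ} (hd : 0 < d) (B : ℝ → Ω → (Fin d → ℝ)) (hB : IsBrownianMotion P B)
    (ε : ℝ) (hε : 0 < ε) (n : ℕ) (t : ℝ) :
    (fun S : Set Ω =>
        S ∩ {ω | hitTimes B ε ω n ≤ t ∧ t < hitTimes B ε ω (n + 1)}) ''
      {S | MeasurableSet[completedNatural P
          (fun r ω => fun i : Fin d => skeleton B ε i r ω) t] S}
    = (fun S : Set Ω =>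
        S ∩ {ω | hitTimes B ε ω n ≤ t ∧ t < hitTimes B ε ω (n + 1)}) ''
      {S | ∀ r : ℝ, MeasurableSet[completedNatural P
          (fun r' ω => fun i : Fin d => skeleton B ε i r' ω) r]
          (S ∩ {ω | hitTimes B ε ω n ≤ r})} := by
  classical
  apply Set.eq_of_subset_of_subset
  · rintro X ⟨S, hS, rfl⟩
    have hS' : MeasurableSet[completedNatural P (skelV B ε) t] S := hS
    obtain ⟨S', h1, h2, h3⟩ := mem_GProp_of_completed P hd hB hε n t hS'
    have hEdef : {ω : Ω | hitTimes B ε ω n ≤ t ∧ t < hitTimes B ε ω (n + 1)}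
        = eventE B ε n t := rfl
    set E := eventE B ε n t with hE
    set N1 := (S ∩ E) \ S' with hN1
    set N2 := (S' ∩ E) \ S with hN2
    have hN1null : P N1 = 0 := by
      apply measure_mono_null _ h3
      intro x hx
      exact ⟨hx.1, fun h => hx.2 h.1⟩
    have hN2null : P N2 = 0 := by
      apply measure_mono_null _ h2
      intro x hx
      exact ⟨hx.1, fun h => hx.2 h.1⟩
    refine ⟨(S' ∪ N1) \ N2, ?_, ?_⟩
    · intro r
      have he : ((S' ∪ N1) \ N2) ∩ {ω | hitTimes B ε ω n ≤ r}
          = ((S' ∩ {ω | hitTimes B ε ω n ≤ r}) ∪ (N1 ∩ {ω | hitTimes B ε ω n ≤ r}))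
            \ (N2 ∩ {ω | hitTimes B ε ω n ≤ r}) := by
        ext x
        simp only [Set.mem_inter_iff, Set.mem_union, Set.mem_diff, Set.mem_setOf_eq]
        tauto
      show MeasurableSet[completedNatural P (skelV B ε) r] _
      rw [he]
      exact ((h1 r).union (measurableSet_completed_null P
          (measure_mono_null Set.inter_subset_left hN1null))).diff
        (measurableSet_completed_null P
          (measure_mono_null Set.inter_subset_left hN2null))
    · show ((S' ∪ N1) \ N2) ∩ E = S ∩ E
      ext x
      simp only [hN1, hN2, Set.mem_inter_iff, Set.mem_union, Set.mem_diff]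
      tauto
  · rintro X ⟨S, hS, rfl⟩
    refine ⟨S ∩ {ω | hitTimes B ε ω n ≤ t}, hS t, ?_⟩
    ext x
    simp only [Set.mem_inter_iff, Set.mem_setOf_eq]
    tauto
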